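/- (Linear-size encoding.) Let φ be a single-variable regular-membership formula over alphabet α whose atom occurrences are recognized by NFAs with state types Q₁, …, Q_k. Then the set {x : List α | x satisfies φ} is the language of a Boolean finite automaton whose state type is the disjoint sum Q₁ ⊕ ⋯ ⊕ Q_k; in particular, if each Qⱼ is finite with nⱼ states, the BFA has exactly n₁ + ⋯ + n_k states, linear in the size of the input problem. -/

import Mathlib

/-- A Boolean finite automaton over alphabet `α` with state type `Q`. -/
structure BFA (α : Type) (Q : Type) where
  I : (Q → Prop) → Prop
  F : Q → Prop
  δ : Q → α → (Q → Prop) → Prop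

/-- A word `w` is accepted by the BFA `B` iff, after substituting transitions for states
symbol by symbol starting from the initial Boolean function, the resulting Boolean function
holds on the final assignment. -/
def BFA.Accepts {α Q : Type} (B : BFA α Q) (w : List α) : Prop :=
  (List.foldl (fun G a => fun v => G (fun q => B.δ q a v)) B.I w) B.F

/-- Single-variable regular-membership formulas over alphabet `α`:
conjunction, disjunction, negation, and atoms `x ∈ L` where the regular
language `L` is presented by an NFA with a finite state type. -/
inductive RegFormula (α : Type) : Type 1
  | atom : (σ : Type) → Fintype σ → NFA α σ → RegFormula α
  | and : RegFormula α → RegFormula α → RegFormula α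
  | or : RegFormula α → RegFormula α → RegFormula α
  | not : RegFormula α → RegFormula α

/-- Satisfaction of a single-variable regular-membership formula by a word `x`,
with the evident Boolean semantics and `x ∈ L` interpreted as language membership. -/
def RegFormula.Sat {α : Type} (x : List α) : RegFormula α → Prop
  | atom _ _ M => x ∈ M.accepts
  | and φ ψ => φ.Sat x ∧ ψ.Sat x
  | or φ ψ => φ.Sat x ∨ ψ.Sat x
  | not φ => ¬ φ.Sat x

/-- The state type of the BFA built for a formula: the disjoint sum `Q₁ ⊕ ⋯ ⊕ Q_k` of the
state types of the NFAs at the atom occurrences. -/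
def RegFormula.States {α : Type} : RegFormula α → Type
  | atom σ _ _ => σ
  | and φ ψ => φ.States ⊕ ψ.States
  | or φ ψ => φ.States ⊕ ψ.States
  | not φ => φ.States

/-- The state type of a formula is finite. -/
def RegFormula.statesFintype {α : Type} : (φ : RegFormula α) → Fintype φ.States
  | atom _ inst _ => inst
  | and φ ψ => @instFintypeSum _ _ φ.statesFintype ψ.statesFintype
  | or φ ψ => @instFintypeSum _ _ φ.statesFintype ψ.statesFintype
  | not φ => φ.statesFintype

/-- The total number `n₁ + ⋯ + n_k` of states of the NFAs at the atom occurrences. -/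
def RegFormula.sumAtomCards {α : Type} : RegFormula α → ℕ
  | atom σ inst _ => @Fintype.card σ inst
  | and φ ψ => φ.sumAtomCards + ψ.sumAtomCards
  | or φ ψ => φ.sumAtomCards + ψ.sumAtomCards
  | not φ => φ.sumAtomCards

section Aux

variable {α Q Q₁ Q₂ : Type}

/-- One step of the BFA substitution. -/
private def BFA.step (B : BFA α Q) (G : (Q → Prop) → Prop) (a : α) : (Q → Prop) → Prop :=
  fun v => G (fun q => B.δ q a v)

private lemma BFA.accepts_def (B : BFA α Q) (w : List α) :
    B.Accepts w ↔ (List.foldl B.step B.I w) B.F := Iff.rfl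

/-- BFA simulating an NFA. -/
private def BFA.ofNFA (M : NFA α Q) : BFA α Q where
  I := fun v => ∃ q, q ∈ M.start ∧ v q
  F := fun q => q ∈ M.accept
  δ := fun q a v => ∃ q', q' ∈ M.step q a ∧ v q'

private lemma BFA.ofNFA_foldl (M : NFA α Q) (w : List α) :
    List.foldl (BFA.ofNFA M).step (BFA.ofNFA M).I w
      = fun v => ∃ q, q ∈ M.evalFrom M.start w ∧ v q := by
  induction w using List.reverseRecOn with
  | nil => rfl
  | append_singleton w a ih =>
    rw [List.foldl_append, List.foldl_cons, List.foldl_nil, ih]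
    funext v
    show (∃ q, q ∈ M.evalFrom M.start w ∧ ∃ q', q' ∈ M.step q a ∧ v q')
        = ∃ q, q ∈ M.evalFrom M.start (w ++ [a]) ∧ v q
    rw [NFA.evalFrom_append, NFA.evalFrom_singleton]
    simp only [NFA.mem_stepSet, eq_iff_iff]
    tauto

private lemma BFA.ofNFA_accepts (M : NFA α Q) (w : List α) :
    (BFA.ofNFA M).Accepts w ↔ w ∈ M.accepts := by
  rw [BFA.accepts_def, BFA.ofNFA_foldl, NFA.mem_accepts]
  tauto

/-- Combination of two BFAs by a Boolean operation on the initial functions. -/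
private def BFA.comb (op : Prop → Prop → Prop) (B₁ : BFA α Q₁) (B₂ : BFA α Q₂) :
    BFA α (Q₁ ⊕ Q₂) where
  I := fun v => op (B₁.I (fun q => v (Sum.inl q))) (B₂.I (fun q => v (Sum.inr q)))
  F := Sum.elim B₁.F B₂.F
  δ := fun q a v =>
    Sum.rec (fun q₁ => B₁.δ q₁ a (fun q => v (Sum.inl q)))
      (fun q₂ => B₂.δ q₂ a (fun q => v (Sum.inr q))) q

private lemma BFA.comb_foldl (op : Prop → Prop → Prop) (B₁ : BFA α Q₁) (B₂ : BFA α Q₂)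
    (w : List α) :
    ∀ (G₁ : (Q₁ → Prop) → Prop) (G₂ : (Q₂ → Prop) → Prop),
    List.foldl (BFA.comb op B₁ B₂).step
        (fun v => op (G₁ (fun q => v (Sum.inl q))) (G₂ (fun q => v (Sum.inr q)))) w
      = fun v => op ((List.foldl B₁.step G₁ w) (fun q => v (Sum.inl q)))
          ((List.foldl B₂.step G₂ w) (fun q => v (Sum.inr q))) := by
  induction w with
  | nil => intro G₁ G₂; rfl
  | cons a w ih =>
    intro G₁ G₂
    simp only [List.foldl_cons]
    exact ih (B₁.step G₁ a) (B₂.step G₂ a)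

private lemma BFA.comb_accepts (op : Prop → Prop → Prop) (B₁ : BFA α Q₁) (B₂ : BFA α Q₂)
    (w : List α) :
    (BFA.comb op B₁ B₂).Accepts w ↔ op (B₁.Accepts w) (B₂.Accepts w) := by
  rw [BFA.accepts_def]
  show (List.foldl (BFA.comb op B₁ B₂).step
      (fun v => op (B₁.I (fun q => v (Sum.inl q))) (B₂.I (fun q => v (Sum.inr q)))) w) _ ↔ _
  rw [BFA.comb_foldl]
  rfl

/-- Negation of a BFA: negate the initial Boolean function. -/
private def BFA.neg (B : BFA α Q) : BFA α Q where
  I := fun v => ¬ B.I v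
  F := B.F
  δ := B.δ

private lemma BFA.neg_foldl (B : BFA α Q) (w : List α) :
    ∀ G : (Q → Prop) → Prop,
      List.foldl (BFA.neg B).step (fun v => ¬ G v) w
        = fun v => ¬ (List.foldl B.step G w) v := by
  induction w with
  | nil => intro G; rfl
  | cons a w ih =>
    intro G
    simp only [List.foldl_cons]
    exact ih (B.step G a)

private lemma BFA.neg_accepts (B : BFA α Q) (w : List α) :
    (BFA.neg B).Accepts w ↔ ¬ B.Accepts w := by
  rw [BFA.accepts_def]
  show (List.foldl (BFA.neg B).step (fun v => ¬ B.I v) w) _ ↔ _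
  rw [BFA.neg_foldl]
  rfl

end Aux

private lemma fintype_card_indep {σ : Type} (i₁ i₂ : Fintype σ) :
    @Fintype.card σ i₁ = @Fintype.card σ i₂ := by
  congr 1
  exact Subsingleton.elim _ _

/-- Linear-size encoding: the set of words satisfying a single-variable regular-membership
formula is the language of a BFA whose state type is the disjoint sum of the atoms' state
types, and this BFA has exactly `n₁ + ⋯ + n_k` states, linear in the size of the input. -/
theorem RegFormula.exists_bfa_states {α : Type} (φ : RegFormula α) :
    (∃ B : BFA α φ.States, ∀ x : List α, B.Accepts x ↔ φ.Sat x) ∧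
      @Fintype.card φ.States φ.statesFintype = φ.sumAtomCards := by
  induction φ with
  | atom σ inst M =>
    exact ⟨⟨BFA.ofNFA M, fun x => BFA.ofNFA_accepts M x⟩, rfl⟩
  | and φ ψ ihφ ihψ =>
    obtain ⟨⟨B₁, h₁⟩, c₁⟩ := ihφ
    obtain ⟨⟨B₂, h₂⟩, c₂⟩ := ihψ
    refine ⟨⟨BFA.comb And B₁ B₂, fun x => ?_⟩, ?_⟩
    · refine (BFA.comb_accepts _ _ _ x).trans ?_
      exact and_congr (h₁ x) (h₂ x)
    · show @Fintype.card _ (@instFintypeSum _ _ φ.statesFintype ψ.statesFintype) = _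
      rw [@Fintype.card_sum _ _ φ.statesFintype ψ.statesFintype, c₁, c₂]
      rfl
  | or φ ψ ihφ ihψ =>
    obtain ⟨⟨B₁, h₁⟩, c₁⟩ := ihφ
    obtain ⟨⟨B₂, h₂⟩, c₂⟩ := ihψ
    refine ⟨⟨BFA.comb Or B₁ B₂, fun x => ?_⟩, ?_⟩
    · refine (BFA.comb_accepts _ _ _ x).trans ?_
      exact or_congr (h₁ x) (h₂ x)
    · show @Fintype.card _ (@instFintypeSum _ _ φ.statesFintype ψ.statesFintype) = _
      rw [@Fintype.card_sum _ _ φ.statesFintype ψ.statesFintype, c₁, c₂]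
      rfl
  | not φ ihφ =>
    obtain ⟨⟨B, h⟩, c⟩ := ihφ
    refine ⟨⟨BFA.neg B, fun x => ?_⟩, c⟩
    refine (BFA.neg_accepts _ x).trans ?_
    exact not_congr (h x)
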